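/- arXiv:2511.00799 — 2 statements merged into one kernel-verified Lean document; each statement's English description precedes it below -/
import Mathlib

section
/- Let A = ⊕_{m≥0} A_m be a commutative graded k-algebra over a field k that is an integral domain, and suppose there is a polynomial P ∈ ℚ[z] of degree n such that dim_k A_m ≤ P(m) for all sufficiently large m. Then the transcendence degree of the fraction field of A over k is at most n + 1. -/
open Module Submodule

section Helpers

variable {k A : Type} [Field k] [CommRing A] [Algebra k A]

/-- finiteness and finrank bound for a finite sup of finite-dim submodules -/
lemma aux_sup_finite (𝒜 : ℕ → Submodule k A) [∀ m, Module.Finite k (𝒜 m)]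
    (t : Finset ℕ) :
    Module.Finite k ↥(t.sup 𝒜) ∧
      Module.finrank k ↥(t.sup 𝒜) ≤ ∑ m ∈ t, Module.finrank k (𝒜 m) := by
  classical
  induction t using Finset.induction_on with
  | empty =>
    rw [Finset.sup_empty]
    exact ⟨Module.Finite.iff_fg.mpr Submodule.fg_bot, by simp⟩
  | insert _ _ hnot ih =>
    rename_i a t
    obtain ⟨ih1, ih2⟩ := ih
    rw [Finset.sup_insert, Finset.sum_insert hnot]
    haveI := ih1
    constructor
    · exact Module.Finite.iff_fg.mpr
        ((Module.Finite.iff_fg.mp inferInstance).sup (Module.Finite.iff_fg.mp ih1))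
    · exact le_trans (Submodule.finrank_add_le_finrank_add_finrank _ _)
        (by omega)

variable (𝒜 : ℕ → Submodule k A) [GradedAlgebra 𝒜]

/-- the filtration -/
noncomputable def FF (D : ℕ) : Submodule k A := (Finset.range (D + 1)).sup 𝒜

lemma FF_mono {D E : ℕ} (h : D ≤ E) : FF 𝒜 D ≤ FF 𝒜 E :=
  Finset.sup_mono (Finset.range_subset_range.mpr (by omega))

lemma grade_le_FF {m D : ℕ} (h : m ≤ D) : 𝒜 m ≤ FF 𝒜 D :=
  Finset.le_sup (Finset.mem_range.mpr (by omega))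

lemma exists_mem_FF (x : A) : ∃ c, x ∈ FF 𝒜 c := by
  classical
  have hx := DirectSum.sum_support_decompose 𝒜 x
  set c := (DirectSum.decompose 𝒜 x).support.sup id with hc
  refine ⟨c, ?_⟩
  nth_rewrite 1 [← hx]
  refine Submodule.sum_mem _ fun m hm => ?_
  exact grade_le_FF 𝒜 (Finset.le_sup (f := id) hm) (SetLike.coe_mem _)

lemma FF_mul {D E : ℕ} {x y : A} (hx : x ∈ FF 𝒜 D) (hy : y ∈ FF 𝒜 E) :
    x * y ∈ FF 𝒜 (D + E) := by
  have hle : FF 𝒜 D * FF 𝒜 E ≤ FF 𝒜 (D + E) := by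
    rw [FF, Finset.sup_eq_iSup, Submodule.iSup_mul]
    refine iSup_le fun i => ?_
    rw [Submodule.iSup_mul]
    refine iSup_le fun hi => ?_
    rw [FF, Finset.sup_eq_iSup, Submodule.mul_iSup]
    refine iSup_le fun j => ?_
    rw [Submodule.mul_iSup]
    refine iSup_le fun hj => ?_
    have h1 : 𝒜 i * 𝒜 j ≤ 𝒜 (i + j) :=
      Submodule.mul_le.mpr fun a ha b hb => SetLike.mul_mem_graded ha hb
    refine h1.trans (grade_le_FF 𝒜 ?_)
    simp only [Finset.mem_range] at hi hj
    omega
  exact hle (Submodule.mul_mem_mul hx hy)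

lemma FF_pow {c : ℕ} {x : A} (hx : x ∈ FF 𝒜 c) (j : ℕ) : x ^ j ∈ FF 𝒜 (j * c) := by
  induction j with
  | zero =>
    simpa using grade_le_FF 𝒜 (le_refl 0) (SetLike.one_mem_graded 𝒜)
  | succ j ih =>
    have := FF_mul 𝒜 ih hx
    rw [← pow_succ] at this
    convert this using 2
    ring

lemma FF_prod {ι : Type} {c : ℕ} (a : ι → A) (ha : ∀ i, a i ∈ FF 𝒜 c)
    (α : ι → ℕ) (t : Finset ι) :
    (∏ i ∈ t, a i ^ α i) ∈ FF 𝒜 ((∑ i ∈ t, α i) * c) := by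
  classical
  induction t using Finset.induction_on with
  | empty =>
    simpa using grade_le_FF 𝒜 (le_refl 0) (SetLike.one_mem_graded 𝒜)
  | insert _ _ hnot ih =>
    rename_i i t
    rw [Finset.prod_insert hnot, Finset.sum_insert hnot, add_mul]
    exact FF_mul 𝒜 (FF_pow 𝒜 (ha i) (α i)) ih

end Helpers


/-- Let `A = ⊕_{m ≥ 0} A_m` be a commutative graded `k`-algebra which is an integral
domain, with each graded piece finite-dimensional over `k`.  Suppose there is a
polynomial `P ∈ ℚ[z]` of degree `n` with `dim_k A_m ≤ P(m)` for all sufficiently large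
`m`.  Then the transcendence degree of the fraction field `Frac` of `A` over `k` is at
most `n + 1`, i.e. every finite algebraically independent subset of `Frac` over `k`
has at most `n + 1` elements. -/
theorem stmt3 (k A Frac : Type) [Field k] [CommRing A] [IsDomain A] [Algebra k A]
    [Field Frac] [Algebra A Frac] [IsFractionRing A Frac]
    [Algebra k Frac] [IsScalarTower k A Frac]
    (𝒜 : ℕ → Submodule k A) [GradedAlgebra 𝒜]
    [∀ m, Module.Finite k (𝒜 m)]
    (n : ℕ) (P : Polynomial ℚ) (hP : P.natDegree = n)
    (hbound : ∃ N : ℕ, ∀ m : ℕ, N ≤ m →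
      (Module.finrank k (𝒜 m) : ℚ) ≤ P.eval (m : ℚ))
    (s : Finset Frac)
    (hs : AlgebraicIndependent k (fun x : (s : Set Frac) => x.val)) :
    s.card ≤ n + 1 := by
  classical
  by_contra hcon
  push_neg at hcon
  obtain ⟨N, hN⟩ := hbound
  set x : ↥(s : Set Frac) → Frac := fun i => i.val with hx
  set d := s.card with hd
  have hd2 : n + 2 ≤ d := hcon
  have hcard : Fintype.card (s : Set Frac) = d := by
    rw [hd]; simpa using Fintype.card_coe s
  -- clear denominators
  obtain ⟨b, hb⟩ := IsLocalization.exist_integer_multiples_of_finite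
    (nonZeroDivisors A) x
  have hb' : ∀ i, ∃ y : A, algebraMap A Frac y = (b : A) • x i := fun i => hb i
  choose a ha using hb'
  -- degrees
  choose ca hca using fun i => exists_mem_FF 𝒜 (a i)
  obtain ⟨cb, hcb⟩ := exists_mem_FF 𝒜 ((b : A))
  set c := max 1 (max cb (Finset.univ.sup ca)) with hc
  have hc1 : 1 ≤ c := le_max_left _ _
  have hacf : ∀ i, a i ∈ FF 𝒜 c := fun i =>
    FF_mono 𝒜 (le_trans (le_trans (Finset.le_sup (Finset.mem_univ i))
      (le_max_right cb _)) (le_max_right 1 _)) (hca i)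
  have hbcf : (b : A) ∈ FF 𝒜 c :=
    FF_mono 𝒜 (le_trans (le_max_left cb _) (le_max_right 1 _)) hcb
  -- key counting inequality
  have key : ∀ E : ℕ, ((E + 1) ^ d : ℕ) ≤
      ∑ m ∈ Finset.range (d * E * c + 1), Module.finrank k (𝒜 m) := by
    intro E
    set M := d * E * c with hM
    set f : A →ₗ[k] Frac := (IsScalarTower.toAlgHom k A Frac).toLinearMap with hf'
    have hf : Function.Injective f := IsFractionRing.injective A Frac
    haveI hFMfin : Module.Finite k ↥(FF 𝒜 M) :=
      (aux_sup_finite 𝒜 (Finset.range (M + 1))).1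
    set W := (FF 𝒜 M).map f with hW
    let e := Submodule.equivMapOfInjective f hf (FF 𝒜 M)
    haveI : Module.Finite k ↥W := Module.Finite.equiv e
    set B : Frac := algebraMap A Frac (b : A) ^ (d * E) with hB'
    have hbne : (b : A) ≠ 0 := nonZeroDivisors.ne_zero b.prop
    have hB : B ≠ 0 := pow_ne_zero _
      ((map_ne_zero_iff _ (IsFractionRing.injective A Frac)).mpr hbne)
    set w : (↥(s : Set Frac) → Fin (E + 1)) → Frac :=
      fun α => B * ∏ i, x i ^ ((α i : ℕ)) with hw
    -- linear independence of w
    have hφinj : Function.Injective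
        (fun (α : ↥(s : Set Frac) → Fin (E + 1)) =>
          (Finsupp.equivFunOnFinite.symm (fun i => ((α i : ℕ))) : ↥(s : Set Frac) →₀ ℕ)) := by
      intro α β hαβ
      have h2 := Finsupp.equivFunOnFinite.symm.injective hαβ
      funext i
      exact Fin.val_injective (congrFun h2 i)
    have li1 := ((MvPolynomial.basisMonomials ↥(s : Set Frac) k).linearIndependent).comp
      _ hφinj
    have li2 := li1.map' (MvPolynomial.aeval x).toLinearMap
      (LinearMap.ker_eq_bot.mpr hs)
    have li3 := li2.map' (LinearMap.mulLeft k B)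
      (LinearMap.ker_eq_bot.mpr (mul_right_injective₀ hB))
    have hwli : LinearIndependent k w := by
      have hwe : w = fun α => (LinearMap.mulLeft k B)
          ((MvPolynomial.aeval x).toLinearMap
            ((MvPolynomial.basisMonomials ↥(s : Set Frac) k)
              (Finsupp.equivFunOnFinite.symm fun i => ((α i : ℕ))))) := by
        funext α
        simp [hw, MvPolynomial.coe_basisMonomials, MvPolynomial.aeval_monomial,
          Finsupp.prod_fintype _ _ (fun i => pow_zero _)]
      rw [hwe]
      exact li3
    -- membership of w α
    have hmem : ∀ α, w α ∈ W := by
      intro α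
      set t := ∑ i, ((α i : ℕ)) with ht'
      have ht : t ≤ d * E := by
        calc t ≤ ∑ _i : ↥(s : Set Frac), E :=
              Finset.sum_le_sum fun i _ => Nat.lt_succ_iff.mp (α i).isLt
          _ = d * E := by
              rw [Finset.sum_const, Finset.card_univ, hcard, smul_eq_mul]
      refine ⟨(b : A) ^ (d * E - t) * ∏ i, a i ^ ((α i : ℕ)), ?_, ?_⟩
      · have h1 := FF_pow 𝒜 hbcf (d * E - t)
        have h2 := FF_prod 𝒜 a hacf (fun i => ((α i : ℕ))) Finset.univ
        have h3 := FF_mul 𝒜 h1 h2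
        have hMe : (d * E - t) * c + t * c = M := by
          rw [← add_mul, Nat.sub_add_cancel ht, hM]
        rw [← hMe]
        exact h3
      · show algebraMap A Frac _ = w α
        calc algebraMap A Frac ((b : A) ^ (d * E - t) * ∏ i, a i ^ ((α i : ℕ)))
            = (algebraMap A Frac (b : A)) ^ (d * E - t) *
                ∏ i, (algebraMap A Frac (b : A) * x i) ^ ((α i : ℕ)) := by
              rw [map_mul, map_pow, map_prod]
              congr 1
              exact Finset.prod_congr rfl fun i _ => by
                rw [map_pow, ha i, Algebra.smul_def]
          _ = (algebraMap A Frac (b : A)) ^ (d * E - t) *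
                ((algebraMap A Frac (b : A)) ^ t * ∏ i, x i ^ ((α i : ℕ))) := by
              simp_rw [mul_pow]
              rw [Finset.prod_mul_distrib, Finset.prod_pow_eq_pow_sum]
          _ = B * ∏ i, x i ^ ((α i : ℕ)) := by
              rw [← mul_assoc, ← pow_add, Nat.sub_add_cancel ht, hB']
    -- conclude
    have hli' : LinearIndependent k (fun α => (⟨w α, hmem α⟩ : W)) :=
      LinearIndependent.of_comp W.subtype hwli
    have hcount := hli'.fintype_card_le_finrank
    have hcardfun : Fintype.card (↥(s : Set Frac) → Fin (E + 1)) = (E + 1) ^ d := by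
      rw [Fintype.card_fun, Fintype.card_fin, hcard]
    have hrank : Module.finrank k ↥W = Module.finrank k ↥(FF 𝒜 M) :=
      e.finrank_eq.symm
    have hsum := (aux_sup_finite 𝒜 (Finset.range (M + 1))).2
    have : FF 𝒜 M = (Finset.range (M + 1)).sup 𝒜 := rfl
    rw [hcardfun, hrank] at hcount
    rw [this] at hcount
    exact le_trans hcount hsum
  -- numeric endgame
  set C := ∑ i ∈ Finset.range (n + 1), |P.coeff i| with hC
  have hC0 : 0 ≤ C := Finset.sum_nonneg fun i _ => abs_nonneg _
  set S := ∑ m ∈ Finset.range N, (Module.finrank k (𝒜 m) : ℚ) with hS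
  have hS0 : 0 ≤ S := Finset.sum_nonneg fun m _ => Nat.cast_nonneg _
  have hPle : ∀ (m M : ℕ), m ≤ M → P.eval (m : ℚ) ≤ C * ((M : ℚ) + 1) ^ n := by
    intro m M hm
    have hM1 : (1 : ℚ) ≤ (M : ℚ) + 1 := by
      have : (0 : ℚ) ≤ (M : ℚ) := Nat.cast_nonneg _
      linarith
    have hdeg : P.natDegree < n + 1 := by omega
    rw [Polynomial.eval_eq_sum_range' hdeg]
    calc ∑ i ∈ Finset.range (n + 1), P.coeff i * (m : ℚ) ^ i
        ≤ ∑ i ∈ Finset.range (n + 1), |P.coeff i| * ((M : ℚ) + 1) ^ n := by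
          refine Finset.sum_le_sum fun i hi => ?_
          have hin : i ≤ n := by
            have := Finset.mem_range.mp hi; omega
          have h1 : (m : ℚ) ^ i ≤ ((M : ℚ) + 1) ^ n := by
            calc (m : ℚ) ^ i ≤ ((M : ℚ) + 1) ^ i := by
                  refine pow_le_pow_left₀ (Nat.cast_nonneg _) ?_ i
                  have : (m : ℚ) ≤ (M : ℚ) := Nat.cast_le.mpr hm
                  linarith
              _ ≤ ((M : ℚ) + 1) ^ n := pow_le_pow_right₀ hM1 hin
          calc P.coeff i * (m : ℚ) ^ i ≤ |P.coeff i| * (m : ℚ) ^ i := by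
                refine mul_le_mul_of_nonneg_right (le_abs_self _) (by positivity)
            _ ≤ |P.coeff i| * ((M : ℚ) + 1) ^ n :=
                mul_le_mul_of_nonneg_left h1 (abs_nonneg _)
      _ = C * ((M : ℚ) + 1) ^ n := by rw [hC, Finset.sum_mul]
  have hsumle : ∀ M : ℕ, (∑ m ∈ Finset.range (M + 1), (Module.finrank k (𝒜 m) : ℚ)) ≤
      S + ((M : ℚ) + 1) * (C * ((M : ℚ) + 1) ^ n) := by
    intro M
    rcases le_or_gt (M + 1) N with hMN | hMN
    · have h1 : (∑ m ∈ Finset.range (M + 1), (Module.finrank k (𝒜 m) : ℚ)) ≤ S := by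
        rw [hS]
        exact Finset.sum_le_sum_of_subset_of_nonneg
          (Finset.range_subset_range.mpr hMN) (fun m _ _ => Nat.cast_nonneg _)
      have h2 : (0 : ℚ) ≤ ((M : ℚ) + 1) * (C * ((M : ℚ) + 1) ^ n) := by positivity
      linarith
    · have hNM : N ≤ M + 1 := by omega
      rw [Finset.range_eq_Ico, ← Finset.sum_Ico_consecutive _ (Nat.zero_le N) hNM,
        ← Finset.range_eq_Ico, ← hS]
      have h2 : (∑ m ∈ Finset.Ico N (M + 1), (Module.finrank k (𝒜 m) : ℚ)) ≤
          ((M : ℚ) + 1) * (C * ((M : ℚ) + 1) ^ n) := by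
        have h3 : (∑ m ∈ Finset.Ico N (M + 1), (Module.finrank k (𝒜 m) : ℚ)) ≤
            ∑ _m ∈ Finset.Ico N (M + 1), C * ((M : ℚ) + 1) ^ n := by
          refine Finset.sum_le_sum fun m hm => ?_
          obtain ⟨hm1, hm2⟩ := Finset.mem_Ico.mp hm
          exact le_trans (hN m hm1) (hPle m M (by omega))
        rw [Finset.sum_const, Nat.card_Ico, nsmul_eq_mul] at h3
        refine h3.trans ?_
        refine mul_le_mul_of_nonneg_right ?_ (by positivity)
        have : ((M + 1 - N : ℕ) : ℚ) ≤ ((M + 1 : ℕ) : ℚ) := Nat.cast_le.mpr (by omega)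
        push_cast at this ⊢
        linarith
      linarith
  set K := C * ((d * c : ℕ) : ℚ) ^ (n + 1) with hK
  have hK0 : 0 ≤ K := by positivity
  set E := ⌈S + K⌉₊ with hE
  have hE1 : S + K + 1 ≤ (E : ℚ) + 1 := by
    have := Nat.le_ceil (S + K)
    linarith
  have hE0 : (1 : ℚ) ≤ (E : ℚ) + 1 := by
    have : (0 : ℚ) ≤ (E : ℚ) := Nat.cast_nonneg _
    linarith
  set M := d * E * c with hM
  have hkeyQ : ((E : ℚ) + 1) ^ d ≤
      ∑ m ∈ Finset.range (M + 1), (Module.finrank k (𝒜 m) : ℚ) := by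
    have h0 := key E
    calc ((E : ℚ) + 1) ^ d = (((E + 1) ^ d : ℕ) : ℚ) := by push_cast; ring
      _ ≤ ((∑ m ∈ Finset.range (M + 1), Module.finrank k (𝒜 m) : ℕ) : ℚ) :=
          Nat.cast_le.mpr h0
      _ = ∑ m ∈ Finset.range (M + 1), (Module.finrank k (𝒜 m) : ℚ) := by push_cast; rfl
  have h1 : ((E : ℚ) + 1) ^ (n + 2) ≤ ((E : ℚ) + 1) ^ d :=
    pow_le_pow_right₀ hE0 hd2
  have h2 := hsumle M
  have hdc1 : 1 ≤ d * c := by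
    have hd1 : 1 ≤ d := by omega
    calc 1 = 1 * 1 := by ring
      _ ≤ d * c := Nat.mul_le_mul hd1 hc1
  have hMQ : ((M : ℚ) + 1) ≤ ((d * c : ℕ) : ℚ) * ((E : ℚ) + 1) := by
    have hnat : M + 1 ≤ (d * c) * (E + 1) := by
      have h5 : M = d * c * E := by rw [hM]; ring
      have h6 : d * c * (E + 1) = d * c * E + d * c := by ring
      omega
    have := (Nat.cast_le (α := ℚ)).mpr hnat
    push_cast at this ⊢
    linarith
  have hdc0 : (0 : ℚ) ≤ ((d * c : ℕ) : ℚ) := Nat.cast_nonneg _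
  have h3 : ((M : ℚ) + 1) * (C * ((M : ℚ) + 1) ^ n) ≤
      (((d * c : ℕ) : ℚ) * ((E : ℚ) + 1)) * (C * (((d * c : ℕ) : ℚ) * ((E : ℚ) + 1)) ^ n) := by
    have hM0 : (0 : ℚ) ≤ (M : ℚ) + 1 := by
      have := Nat.cast_nonneg (α := ℚ) M; linarith
    have hb0 : (0 : ℚ) ≤ ((d * c : ℕ) : ℚ) * ((E : ℚ) + 1) := le_trans hM0 hMQ
    have hpow : ((M : ℚ) + 1) ^ n ≤ (((d * c : ℕ) : ℚ) * ((E : ℚ) + 1)) ^ n :=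
      pow_le_pow_left₀ hM0 hMQ n
    have hc2 : C * ((M : ℚ) + 1) ^ n ≤ C * (((d * c : ℕ) : ℚ) * ((E : ℚ) + 1)) ^ n :=
      mul_le_mul_of_nonneg_left hpow hC0
    exact mul_le_mul hMQ hc2 (mul_nonneg hC0 (pow_nonneg hM0 n)) hb0
  have h4 : (((d * c : ℕ) : ℚ) * ((E : ℚ) + 1)) * (C * (((d * c : ℕ) : ℚ) * ((E : ℚ) + 1)) ^ n)
      = K * ((E : ℚ) + 1) ^ (n + 1) := by
    rw [hK, mul_pow]; ring
  have hfin : ((E : ℚ) + 1) ^ (n + 2) ≤ S + K * ((E : ℚ) + 1) ^ (n + 1) := by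
    rw [h4] at h3
    calc ((E : ℚ) + 1) ^ (n + 2) ≤ ((E : ℚ) + 1) ^ d := h1
      _ ≤ ∑ m ∈ Finset.range (M + 1), (Module.finrank k (𝒜 m) : ℚ) := hkeyQ
      _ ≤ S + ((M : ℚ) + 1) * (C * ((M : ℚ) + 1) ^ n) := h2
      _ ≤ S + K * ((E : ℚ) + 1) ^ (n + 1) := by linarith
  set p := ((E : ℚ) + 1) ^ (n + 1) with hp
  have hp1 : (1 : ℚ) ≤ p := one_le_pow₀ hE0
  have hp0 : (0 : ℚ) ≤ p := by linarith
  have hge : p * (S + K + 1) ≤ ((E : ℚ) + 1) ^ (n + 2) := by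
    have hq : ((E : ℚ) + 1) ^ (n + 2) = p * ((E : ℚ) + 1) := by rw [hp, ← pow_succ]
    rw [hq]
    exact mul_le_mul_of_nonneg_left hE1 hp0
  have hSp : S ≤ S * p := by
    calc S = S * 1 := by ring
      _ ≤ S * p := mul_le_mul_of_nonneg_left hp1 hS0
  have hexp2 : p * (S + K + 1) = S * p + K * p + p := by ring
  rw [hexp2] at hge
  linarith [hfin, hge, hSp, hp1]
end

section
/- Let k be a field and A = ⊕_{m≥0} A_m a graded k-algebra domain with fraction field K(A). Suppose s_0, ..., s_r ∈ A_{m_0} are homogeneous elements of the same degree m_0 > 0 with s_0 ≠ 0, such that the ratios ξ_i = s_i/s_0 (1 ≤ i ≤ r) are algebraically independent over k in K(A). Then s_0, s_1, ..., s_r are algebraically independent over k in K(A). -/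
open MvPolynomial

private lemma graded_piece_zero {k A : Type} [Field k] [CommRing A] [Algebra k A]
    (𝒜 : ℕ → Submodule k A) [GradedAlgebra 𝒜]
    {ι : Type} (t : Finset ι) (n : ι → ℕ) (hn : Set.InjOn n t)
    (x : ι → A) (hx : ∀ i ∈ t, x i ∈ 𝒜 (n i))
    (h : ∑ i ∈ t, x i = 0) : ∀ i ∈ t, x i = 0 := by
  intro i hi
  have h2 := congrArg (DirectSum.decompose 𝒜) h
  rw [DirectSum.decompose_sum, DirectSum.decompose_zero] at h2
  have h3 := congrArg (fun v : DirectSum ℕ (fun j => 𝒜 j) => ((v (n i)) : A)) h2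
  simp only [DirectSum.zero_apply, ZeroMemClass.coe_zero] at h3
  rw [DFinsupp.finset_sum_apply, AddSubmonoidClass.coe_finset_sum] at h3
  rw [Finset.sum_eq_single_of_mem i hi
    (fun b hb hbi => by
      rw [DirectSum.decompose_of_mem_ne 𝒜 (hx b hb) (fun hc => hbi (hn hb hi hc))]),
    DirectSum.decompose_of_mem_same 𝒜 (hx i hi)] at h3
  exact h3

private lemma key_mem {k A Frac : Type} [Field k] [CommRing A] [IsDomain A] [Algebra k A]
    [Field Frac] [Algebra A Frac] [IsFractionRing A Frac]
    [Algebra k Frac] [IsScalarTower k A Frac]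
    (𝒜 : ℕ → Submodule k A) [GradedAlgebra 𝒜]
    {r m₀ : ℕ} {s : Fin (r + 1) → A}
    (hhom : ∀ i, s i ∈ 𝒜 m₀) (hs0 : s 0 ≠ 0)
    (q : MvPolynomial (Fin r) k) (D : ℕ) (hD : q.totalDegree ≤ D) :
    ∃ a ∈ 𝒜 (D * m₀), algebraMap A Frac a =
      aeval (fun i : Fin r => algebraMap A Frac (s i.succ) / algebraMap A Frac (s 0)) q
        * algebraMap A Frac (s 0) ^ D := by
  classical
  set f := algebraMap A Frac with hfdef
  have finj : Function.Injective f := IsFractionRing.injective A Frac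
  have hs0F : f (s 0) ≠ 0 := fun h => hs0 (finj (by rwa [map_zero]))
  set ξ : Fin r → Frac := fun i => f (s i.succ) / f (s 0) with hxi
  have main : aeval ξ q * f (s 0) ^ D ∈
      (𝒜 (D * m₀)).map (IsScalarTower.toAlgHom k A Frac).toLinearMap := by
    rw [← q.support_sum_monomial_coeff, map_sum, Finset.sum_mul]
    apply Submodule.sum_mem
    intro α hα
    have hd : (α.sum fun _ e => e) ≤ D := le_trans (MvPolynomial.le_totalDegree hα) hD
    set d := α.sum fun _ e => e with hdd
    have step1 : (α.prod fun i e => ξ i ^ e) * f (s 0) ^ d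
        = f (α.prod fun i e => s i.succ ^ e) := by
      rw [Finsupp.prod, hdd, Finsupp.sum, ← Finset.prod_pow_eq_pow_sum,
        ← Finset.prod_mul_distrib, map_finsuppProd, Finsupp.prod]
      refine Finset.prod_congr rfl fun i _ => ?_
      rw [← mul_pow, div_mul_cancel₀ _ hs0F, map_pow]
    have hmem : (α.prod fun i e => s i.succ ^ e) * s 0 ^ (D - d) ∈ 𝒜 (D * m₀) := by
      have h1 : (α.prod fun i e => s i.succ ^ e) ∈ 𝒜 (∑ i ∈ α.support, α i • m₀) := by
        rw [Finsupp.prod]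
        exact SetLike.prod_pow_mem_graded 𝒜 (fun _ => m₀) (fun i => s i.succ)
          (fun i => α i) (fun i _ => hhom i.succ)
      have h2 : s 0 ^ (D - d) ∈ 𝒜 ((D - d) • m₀) := SetLike.pow_mem_graded _ (hhom 0)
      have h3 := SetLike.mul_mem_graded h1 h2
      have harith : (∑ i ∈ α.support, α i • m₀) + (D - d) • m₀ = D * m₀ := by
        simp only [smul_eq_mul]
        rw [← Finset.sum_mul, ← add_mul]
        congr 1
        have : (∑ i ∈ α.support, α i) = d := rfl
        omega
      rwa [harith] at h3
    have hpow : f (s 0) ^ D = f (s 0) ^ d * f (s 0) ^ (D - d) := by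
      rw [← pow_add, Nat.add_sub_cancel' hd]
    have hterm : aeval ξ (monomial α (coeff α q)) * f (s 0) ^ D
        = coeff α q • ((IsScalarTower.toAlgHom k A Frac).toLinearMap
          ((α.prod fun i e => s i.succ ^ e) * s 0 ^ (D - d))) := by
      show _ = coeff α q • f _
      rw [aeval_monomial, hpow, Algebra.smul_def, map_mul, map_pow, ← step1, hdd]
      ring
    rw [hterm]
    exact Submodule.smul_mem _ _ (Submodule.mem_map_of_mem hmem)
  obtain ⟨a, ha, hfa⟩ := main
  exact ⟨a, ha, hfa⟩

private lemma trans_lemma {k A Frac : Type} [Field k] [CommRing A] [IsDomain A] [Algebra k A]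
    [Field Frac] [Algebra A Frac] [IsFractionRing A Frac]
    [Algebra k Frac] [IsScalarTower k A Frac]
    (𝒜 : ℕ → Submodule k A) [GradedAlgebra 𝒜]
    {r m₀ : ℕ} (hm₀ : 0 < m₀) {s : Fin (r + 1) → A}
    (hhom : ∀ i, s i ∈ 𝒜 m₀) (hs0 : s 0 ≠ 0) :
    Transcendental (Algebra.adjoin k (Set.range fun i : Fin r =>
      algebraMap A Frac (s i.succ) / algebraMap A Frac (s 0)))
      (algebraMap A Frac (s 0)) := by
  classical
  set f := algebraMap A Frac with hfdef
  have finj : Function.Injective f := IsFractionRing.injective A Frac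
  have hs0F : f (s 0) ≠ 0 := fun h => hs0 (finj (by rwa [map_zero]))
  set ξ : Fin r → Frac := fun i => f (s i.succ) / f (s 0) with hxi
  rw [transcendental_iff]
  intro p hp
  set n := p.natDegree with hn
  have hcoeff : ∀ j : ℕ, ∃ q : MvPolynomial (Fin r) k,
      aeval ξ q = ((p.coeff j : _) : Frac) := by
    intro j
    have h2 : ((p.coeff j : Frac)) ∈ (MvPolynomial.aeval (R := k) ξ).range := by
      rw [← Algebra.adjoin_range_eq_range_aeval k ξ]
      exact (p.coeff j).2
    obtain ⟨q, hq⟩ := h2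
    exact ⟨q, hq⟩
  choose Q hQ using hcoeff
  set D := (Finset.range (n+1)).sup fun j => (Q j).totalDegree with hDD
  have key' : ∀ j : ℕ, j < n + 1 →
      ∃ a, a ∈ 𝒜 (D * m₀) ∧ f a = aeval ξ (Q j) * f (s 0) ^ D :=
    fun j hj => key_mem 𝒜 hhom hs0 (Q j) D
      (hDD ▸ Finset.le_sup (f := fun j => (Q j).totalDegree) (Finset.mem_range.2 hj))
  choose! a ha1 ha2 using key'
  have hsmul : ∀ (c : (Algebra.adjoin k (Set.range ξ))) (x : Frac), c • x = (c : Frac) * x :=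
    fun c x => rfl
  have hsum : ∑ j ∈ Finset.range (n+1), a j * s 0 ^ j = 0 := by
    apply finj
    rw [map_sum, map_zero]
    have hterm : ∀ j ∈ Finset.range (n+1),
        f (a j * s 0 ^ j) = ((p.coeff j : Frac)) * f (s 0) ^ D * f (s 0) ^ j := by
      intro j hj
      rw [map_mul, map_pow, ha2 j (Finset.mem_range.1 hj), hQ j]
    rw [Finset.sum_congr rfl hterm]
    calc ∑ j ∈ Finset.range (n+1), ((p.coeff j : Frac)) * f (s 0) ^ D * f (s 0) ^ j
        = (∑ j ∈ Finset.range (n+1), ((p.coeff j : Frac)) * f (s 0) ^ j) * f (s 0) ^ D := by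
          rw [Finset.sum_mul]; exact Finset.sum_congr rfl fun j _ => by ring
      _ = (Polynomial.aeval (f (s 0)) p) * f (s 0) ^ D := by
          have heq : (Polynomial.aeval (f (s 0)) p)
              = ∑ j ∈ Finset.range (n+1), ((p.coeff j : Frac)) * f (s 0) ^ j := by
            rw [Polynomial.aeval_eq_sum_range]
            exact Finset.sum_congr rfl fun j _ => hsmul _ _
          rw [heq]
      _ = 0 := by rw [hp, zero_mul]
  have hzero := graded_piece_zero 𝒜 (Finset.range (n+1))
    (fun j => D * m₀ + j * m₀)
    (fun j _ j' _ h => by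
      have := Nat.add_left_cancel h
      exact Nat.eq_of_mul_eq_mul_right hm₀ this)
    (fun j => a j * s 0 ^ j)
    (fun j hj => by
      have := SetLike.mul_mem_graded (ha1 j (Finset.mem_range.1 hj))
        (SetLike.pow_mem_graded (A := 𝒜) j (hhom 0))
      simpa [smul_eq_mul] using this)
    hsum
  have hcz : ∀ j, j < n + 1 → p.coeff j = 0 := by
    intro j hj
    have h1 : a j * s 0 ^ j = 0 := hzero j (Finset.mem_range.2 hj)
    have h2 : a j = 0 := by
      rcases mul_eq_zero.1 h1 with h | h
      · exact h
      · exact absurd h (pow_ne_zero j hs0)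
    have h3 : ((p.coeff j : Frac)) * f (s 0) ^ D = 0 := by
      rw [← hQ j, ← ha2 j hj, h2, map_zero]
    have h4 : ((p.coeff j : Frac)) = 0 :=
      (mul_eq_zero.1 h3).resolve_right (pow_ne_zero D hs0F)
    exact Subtype.ext h4
  refine Polynomial.ext fun j => ?_
  rw [Polynomial.coeff_zero]
  rcases lt_or_ge j (n + 1) with h | h
  · exact hcz j h
  · exact Polynomial.coeff_eq_zero_of_natDegree_lt
      (Nat.lt_of_lt_of_le (Nat.lt_succ_self _) h)

/-- Let `A` be a graded `k`-algebra domain with fraction field `Frac`, and let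
`s_0, …, s_r` be homogeneous elements of the same degree `m₀ > 0` with `s_0 ≠ 0`.
If the ratios `ξ_i = s_i / s_0` (for `1 ≤ i ≤ r`) are algebraically independent over
`k` in `Frac`, then `s_0, s_1, …, s_r` are algebraically independent over `k`. -/
theorem stmt8 (k A Frac : Type) [Field k] [CommRing A] [IsDomain A] [Algebra k A]
    [Field Frac] [Algebra A Frac] [IsFractionRing A Frac]
    [Algebra k Frac] [IsScalarTower k A Frac]
    (𝒜 : ℕ → Submodule k A) [GradedAlgebra 𝒜]
    (r m₀ : ℕ) (hm₀ : 0 < m₀)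
    (s : Fin (r + 1) → A)
    (hhom : ∀ i, s i ∈ 𝒜 m₀) (hs0 : s 0 ≠ 0)
    (hξ : AlgebraicIndependent k
      (fun i : Fin r => algebraMap A Frac (s i.succ) / algebraMap A Frac (s 0))) :
    AlgebraicIndependent k (fun i : Fin (r + 1) => algebraMap A Frac (s i)) := by
  classical
  have finj : Function.Injective (algebraMap A Frac) := IsFractionRing.injective A Frac
  set f := algebraMap A Frac with hfdef
  have hs0F : f (s 0) ≠ 0 := fun h => hs0 (finj (by rwa [map_zero]))
  set ξ : Fin r → Frac := fun i => f (s i.succ) / f (s 0) with hxi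
  have htr := trans_lemma (Frac := Frac) 𝒜 hm₀ hhom hs0
  have hy : AlgebraicIndependent k (fun o : Option (Fin r) => o.elim (f (s 0)) ξ) :=
    (hξ.option_iff_transcendental (f (s 0))).2 htr
  have hz : AlgebraicIndependent k
      ((fun o : Option (Fin r) => o.elim (f (s 0)) ξ) ∘ (finSuccEquiv r)) :=
    hy.comp _ (finSuccEquiv r).injective
  set z := (fun o : Option (Fin r) => o.elim (f (s 0)) ξ) ∘ (finSuccEquiv r) with hzdef
  have hz0 : z 0 = f (s 0) := by simp [hzdef]
  have hzs : ∀ j : Fin r, z j.succ = ξ j := by intro j; simp [hzdef]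
  set w : Fin (r+1) → MvPolynomial (Fin (r+1)) k :=
    fun i => Fin.cases (MvPolynomial.X 0) (fun j => MvPolynomial.X 0 * MvPolynomial.X j.succ) i
    with hwdef
  set T : MvPolynomial (Fin (r+1)) k →ₐ[k] MvPolynomial (Fin (r+1)) k := aeval w with hTdef
  have hw0 : w 0 = MvPolynomial.X 0 := rfl
  have hws : ∀ j : Fin r, w j.succ = MvPolynomial.X 0 * MvPolynomial.X j.succ :=
    fun j => by simp [hwdef]
  have hT : Function.Injective T := by
    set F := FractionRing (MvPolynomial (Fin (r+1)) k) with hFdef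
    have hinjF : Function.Injective (algebraMap (MvPolynomial (Fin (r+1)) k) F) :=
      IsFractionRing.injective _ _
    have hX0 : (algebraMap (MvPolynomial (Fin (r+1)) k) F) (MvPolynomial.X 0) ≠ 0 := by
      rw [map_ne_zero_iff _ hinjF]
      exact MvPolynomial.X_ne_zero 0
    set u : Fin (r+1) → F := fun i => Fin.cases (algebraMap (MvPolynomial (Fin (r+1)) k) F (MvPolynomial.X 0))
      (fun j => algebraMap (MvPolynomial (Fin (r+1)) k) F (MvPolynomial.X j.succ) /
        algebraMap (MvPolynomial (Fin (r+1)) k) F (MvPolynomial.X 0)) i with hudef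
    have hu0 : u 0 = algebraMap (MvPolynomial (Fin (r+1)) k) F (MvPolynomial.X 0) := rfl
    have hus : ∀ j : Fin r, u j.succ = algebraMap (MvPolynomial (Fin (r+1)) k) F (MvPolynomial.X j.succ) /
        algebraMap (MvPolynomial (Fin (r+1)) k) F (MvPolynomial.X 0) := fun j => by simp [hudef]
    have hcomp : ((aeval u).comp T) = IsScalarTower.toAlgHom k (MvPolynomial (Fin (r+1)) k) F := by
      apply MvPolynomial.algHom_ext
      intro i
      induction i using Fin.cases with
      | zero =>
        simp only [AlgHom.comp_apply, hTdef, aeval_X, hw0, hu0,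
          IsScalarTower.coe_toAlgHom', MvPolynomial.algebraMap_eq]
      | succ j =>
        simp only [AlgHom.comp_apply, hTdef, aeval_X, hws j, map_mul, aeval_X, hu0, hus j,
          IsScalarTower.coe_toAlgHom']
        rw [mul_comm, div_mul_cancel₀ _ hX0]
    have hc2 : Function.Injective (⇑(aeval u) ∘ ⇑T) := by
      rw [← AlgHom.coe_comp, hcomp]
      exact hinjF
    exact hc2.of_comp
  have hfinal : ((aeval z).comp T) = aeval (fun i : Fin (r+1) => f (s i)) := by
    apply MvPolynomial.algHom_ext
    intro i
    induction i using Fin.cases with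
    | zero =>
      simp only [AlgHom.comp_apply, hTdef, aeval_X, hw0, hz0]
    | succ j =>
      simp only [AlgHom.comp_apply, hTdef, aeval_X, hws j, map_mul, hz0, hzs j, hxi]
      rw [mul_comm, div_mul_cancel₀ _ hs0F]
  rw [algebraicIndependent_iff_injective_aeval] at hz ⊢
  have hc : Function.Injective (⇑(aeval z) ∘ ⇑T) := hz.comp hT
  rw [← AlgHom.coe_comp, hfinal] at hc
  exact hc
end
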